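/- Let c_p > 0, let g₁ : ℝⁿ → ℝ be continuously differentiable, let h₁ : ℝⁿ → ℝ be continuous, and let sequences x_j, d_j, v_j ∈ ℝⁿ satisfy: x_j → x̄, d_j → 0, the sequence {v_j} is bounded, and for every j, max{ g₁(x_j) − h₁(x_j) + ⟨∇g₁(x_j) − v_j, d_j⟩, 0 } < c_p ‖d_j‖. Then g₁(x̄) − h₁(x̄) ≤ 0. -/

import Mathlib

open Filter
open scoped RealInnerProductSpace Topology

/-- feasibility of accumulation points. If `x_j → x̄`, `d_j → 0`, the
subgradients `v_j` are bounded, and the constraint-violation measure satisfies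
`max{g₁(x_j) − h₁(x_j) + ⟨∇g₁(x_j) − v_j, d_j⟩, 0} < c_p ‖d_j‖` for all `j`, then
`g₁(x̄) − h₁(x̄) ≤ 0`. -/
theorem feasibility_of_limit {n : ℕ} (c_p : ℝ) (hc : 0 < c_p)
    (g₁ h₁ : EuclideanSpace ℝ (Fin n) → ℝ)
    (hg : ContDiff ℝ 1 g₁) (hh : Continuous h₁)
    (x d v : ℕ → EuclideanSpace ℝ (Fin n)) (xb : EuclideanSpace ℝ (Fin n))
    (hx : Tendsto x atTop (𝓝 xb)) (hd : Tendsto d atTop (𝓝 0))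
    (hv : ∃ M : ℝ, ∀ j, ‖v j‖ ≤ M)
    (hineq : ∀ j,
      max (g₁ (x j) - h₁ (x j) + ⟪gradient g₁ (x j) - v j, d j⟫) 0 < c_p * ‖d j‖) :
    g₁ xb - h₁ xb ≤ 0 := by
  obtain ⟨M, hM⟩ := hv
  -- gradient is continuous
  have hgradcont : Continuous (gradient g₁) := by
    have h1 : Continuous (fderiv ℝ g₁) := hg.continuous_fderiv one_ne_zero
    exact (InnerProductSpace.toDual ℝ _).symm.continuous.comp h1
  have hgrad : Tendsto (fun j => gradient g₁ (x j)) atTop (𝓝 (gradient g₁ xb)) :=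
    (hgradcont.tendsto xb).comp hx
  have hnd : Tendsto (fun j => ‖d j‖) atTop (𝓝 0) := by
    simpa using hd.norm
  -- inner product term tends to 0
  have hbound : Tendsto (fun j => (‖gradient g₁ (x j)‖ + M) * ‖d j‖) atTop (𝓝 0) := by
    have := (hgrad.norm.add_const M).mul hnd
    simpa using this
  have hinner : Tendsto (fun j => ⟪gradient g₁ (x j) - v j, d j⟫) atTop (𝓝 0) := by
    apply squeeze_zero_norm _ hbound
    intro j
    calc ‖⟪gradient g₁ (x j) - v j, d j⟫‖ ≤ ‖gradient g₁ (x j) - v j‖ * ‖d j‖ :=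
          norm_inner_le_norm _ _
      _ ≤ (‖gradient g₁ (x j)‖ + M) * ‖d j‖ := by
          gcongr
          exact (norm_sub_le _ _).trans (by gcongr; exact hM j)
  have hfg : Tendsto (fun j => g₁ (x j) - h₁ (x j) + ⟪gradient g₁ (x j) - v j, d j⟫)
      atTop (𝓝 (g₁ xb - h₁ xb + 0)) :=
    (((hg.continuous.tendsto xb).comp hx).sub ((hh.tendsto xb).comp hx)).add hinner
  have hrhs : Tendsto (fun j => c_p * ‖d j‖) atTop (𝓝 (c_p * 0)) :=
    tendsto_const_nhds.mul hnd
  have := le_of_tendsto_of_tendsto' hfg hrhs (fun j =>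
    le_of_lt (lt_of_le_of_lt (le_max_left _ _) (hineq j)))
  linarith
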